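/- For bounded self-adjoint operators A and B on a Hilbert space, the Hausdorff distance between the spectrum of A and the spectrum of B is at most the operator norm of A - B. -/

import Mathlib

open Metric

private lemma key_infdist {H : Type*} [NormedAddCommGroup H] [InnerProductSpace ℂ H]
    [CompleteSpace H] [Nontrivial H]
    (A B : H →L[ℂ] H) (hA : IsSelfAdjoint A) (hB : IsSelfAdjoint B)
    {x : ℝ} (hx : x ∈ spectrum ℝ A) :
    ∃ y ∈ spectrum ℝ B, |x - y| ≤ ‖A - B‖ := by
  have hBne : (spectrum ℝ B).Nonempty := by
    have h1 : (spectrum ℂ B).Nonempty := spectrum.nonempty B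
    have h2 := hB.spectrumRestricts.algebraMap_image
    rw [← h2] at h1
    exact h1.of_image
  have hBc : IsCompact (spectrum ℝ B) := spectrum.isCompact B
  set d := infDist x (spectrum ℝ B) with hd
  obtain ⟨y, hy, hyd⟩ := hBc.exists_infDist_eq_dist hBne x
  refine ⟨y, hy, ?_⟩
  rw [Real.dist_eq] at hyd
  rw [← hyd]
  by_contra hlt
  push_neg at hlt
  -- hlt : ‖A - B‖ < d
  have hd0 : 0 < d := lt_of_le_of_lt (norm_nonneg _) hlt
  have hne : ∀ t ∈ spectrum ℝ B, t - x ≠ 0 := by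
    intro t ht h0
    have : d ≤ dist x t := infDist_le_dist_of_mem ht
    rw [Real.dist_eq, show x - t = -(t - x) by ring, h0] at this
    simp at this
    exact absurd this (not_le.mpr hd0)
  have hdle : ∀ t ∈ spectrum ℝ B, d ≤ |t - x| := by
    intro t ht
    have : d ≤ dist x t := infDist_le_dist_of_mem ht
    rwa [Real.dist_eq, abs_sub_comm] at this
  set f : ℝ → ℝ := fun t => (t - x)⁻¹ with hf
  have hfc : ContinuousOn f (spectrum ℝ B) := by
    apply ContinuousOn.inv₀
    · fun_prop
    · exact hne
  have hgc : ContinuousOn (fun t : ℝ => t - x) (spectrum ℝ B) := by fun_prop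
  set R : H →L[ℂ] H := cfc f B with hR
  set c : H →L[ℂ] H := algebraMap ℝ (H →L[ℂ] H) x with hc
  have hsub : cfc (fun t : ℝ => t - x) B = B - c := by
    rw [cfc_sub (fun t : ℝ => t) (fun _ : ℝ => x) B (by fun_prop) (by fun_prop), cfc_id' ℝ B,
      cfc_const x B]
  have h1 : R * (B - c) = 1 := by
    rw [← hsub, hR, ← cfc_mul f _ B hfc hgc]
    calc cfc (fun t => f t * (t - x)) B = cfc (fun _ : ℝ => (1 : ℝ)) B := by
          apply cfc_congr
          intro t ht
          exact inv_mul_cancel₀ (hne t ht)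
      _ = 1 := cfc_const_one ℝ B
  have h2 : (B - c) * R = 1 := by
    rw [← hsub, hR, ← cfc_mul _ f B hgc hfc]
    calc cfc (fun t => (t - x) * f t) B = cfc (fun _ : ℝ => (1 : ℝ)) B := by
          apply cfc_congr
          intro t ht
          exact mul_inv_cancel₀ (hne t ht)
      _ = 1 := cfc_const_one ℝ B
  have hRnorm : ‖R‖ ≤ d⁻¹ := by
    apply norm_cfc_le (by positivity)
    intro t ht
    rw [Real.norm_eq_abs, hf, abs_inv]
    exact inv_anti₀ hd0 (hdle t ht)
  -- T := R * (A - B) has norm < 1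
  set T : H →L[ℂ] H := R * (A - B) with hT
  have hTnorm : ‖T‖ < 1 := by
    calc ‖T‖ ≤ ‖R‖ * ‖A - B‖ := norm_mul_le _ _
      _ ≤ d⁻¹ * ‖A - B‖ := by
          apply mul_le_mul_of_nonneg_right hRnorm (norm_nonneg _)
      _ < 1 := by
          rw [inv_mul_lt_iff₀ hd0, mul_one]
          exact hlt
  have hunit1 : IsUnit (1 + T) := by
    have := (Units.oneSub (-T) (by rwa [norm_neg])).isUnit
    rwa [Units.val_oneSub, sub_neg_eq_add] at this
  have hunitB : IsUnit (B - c) := ⟨⟨B - c, R, h2, h1⟩, rfl⟩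
  have hfact : A - c = (B - c) * (1 + T) := by
    rw [hT, mul_add, mul_one, ← mul_assoc, h2, one_mul]
    abel
  have hunitA : IsUnit (A - c) := hfact ▸ hunitB.mul hunit1
  rw [spectrum.mem_iff] at hx
  exact hx (by simpa using hunitA.neg)

/-- For bounded self-adjoint operators `A`, `B` on a complex Hilbert space, the Hausdorff
distance between their spectra is at most `‖A - B‖`. -/
theorem stmt_2 {H : Type*} [NormedAddCommGroup H] [InnerProductSpace ℂ H] [CompleteSpace H]
    (A B : H →L[ℂ] H) (hA : IsSelfAdjoint A) (hB : IsSelfAdjoint B) :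
    Metric.hausdorffDist (spectrum ℂ A) (spectrum ℂ B) ≤ ‖A - B‖ := by
  rcases subsingleton_or_nontrivial H with hH | hH
  · have : Subsingleton (H →L[ℂ] H) := inferInstance
    rw [spectrum.of_subsingleton, hausdorffDist_empty']
    exact norm_nonneg _
  · apply hausdorffDist_le_of_mem_dist (norm_nonneg _)
    · intro z hz
      rw [← hA.spectrumRestricts.algebraMap_image] at hz
      obtain ⟨xr, hxr, rfl⟩ := hz
      obtain ⟨y, hy, hxy⟩ := key_infdist A B hA hB hxr
      refine ⟨algebraMap ℝ ℂ y, ?_, ?_⟩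
      · rw [← hB.spectrumRestricts.algebraMap_image]
        exact ⟨y, hy, rfl⟩
      · calc dist (algebraMap ℝ ℂ xr) (algebraMap ℝ ℂ y)
              = dist xr y := Complex.isometry_ofReal.dist_eq xr y
          _ ≤ ‖A - B‖ := by rwa [Real.dist_eq]
    · intro z hz
      rw [← hB.spectrumRestricts.algebraMap_image] at hz
      obtain ⟨xr, hxr, rfl⟩ := hz
      obtain ⟨y, hy, hxy⟩ := key_infdist B A hB hA hxr
      refine ⟨algebraMap ℝ ℂ y, ?_, ?_⟩
      · rw [← hA.spectrumRestricts.algebraMap_image]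
        exact ⟨y, hy, rfl⟩
      · rw [norm_sub_rev]
        calc dist (algebraMap ℝ ℂ xr) (algebraMap ℝ ℂ y)
              = dist xr y := Complex.isometry_ofReal.dist_eq xr y
          _ ≤ ‖B - A‖ := by rwa [Real.dist_eq]
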